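/- Let L : ℝ^d → ℝ be convex and differentiable, λ ∈ ℝ^d with nonnegative entries, β*, β̃ ∈ ℝ^d, and E an index set containing the support of β*. Suppose there exists ξ in the subdifferential of ‖·‖₁ at β̃ such that ‖∇L(β̃) + λ ⊙ ξ‖_∞ ≤ ε, and that min_{j∈E^c} λ_j > ‖∇L(β*)‖_∞ + ε. Then ‖(β̃ − β*)_{E^c}‖₁ ≤ [(max_j λ_j + ‖∇L(β*)‖_∞ + ε) / (min_{j∈E^c} λ_j − ‖∇L(β*)‖_∞ − ε)] · ‖(β̃ − β*)_{E}‖₁. -/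

import Mathlib

/-- Lemma F.1: ℓ₁ cone property for approximate solutions. -/
theorem l1_cone_property {d : ℕ} (L : (Fin d → ℝ) → ℝ)
    (hdiff : Differentiable ℝ L) (hconv : ConvexOn ℝ Set.univ L)
    (l : Fin d → ℝ) (hl : ∀ j, 0 ≤ l j)
    (s : Finset (Fin d))
    (βstar βtil ξ : Fin d → ℝ)
    (hsupp : ∀ j ∉ s, βstar j = 0)
    (hξ1 : ∀ j, |ξ j| ≤ 1)
    (hξ2 : ∀ j, βtil j ≠ 0 → ξ j = Real.sign (βtil j))
    (ε : ℝ)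
    (hstat : ∀ j, |fderiv ℝ L βtil (Pi.single j 1) + l j * ξ j| ≤ ε)
    (hmin : (⨆ j, |fderiv ℝ L βstar (Pi.single j 1)|) + ε
        < ⨅ j : {j : Fin d // j ∉ s}, l (j : Fin d)) :
    ∑ j ∈ sᶜ, |βtil j - βstar j|
      ≤ ((⨆ j, l j) + (⨆ j, |fderiv ℝ L βstar (Pi.single j 1)|) + ε)
          / ((⨅ j : {j : Fin d // j ∉ s}, l (j : Fin d))
              - (⨆ j, |fderiv ℝ L βstar (Pi.single j 1)|) - ε)
        * ∑ j ∈ s, |βtil j - βstar j| := by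
  classical
  rcases Nat.eq_zero_or_pos d with hd | hd
  · subst hd
    have hs : s = ∅ := Finset.eq_empty_of_isEmpty s
    simp [hs]
  haveI : Nonempty (Fin d) := ⟨⟨0, hd⟩⟩
  set G : ℝ := ⨆ j, |fderiv ℝ L βstar (Pi.single j 1)| with hGdef
  set lmin : ℝ := ⨅ j : {j : Fin d // j ∉ s}, l (j : Fin d) with hlmindef
  set lmax : ℝ := ⨆ j, l j with hlmaxdef
  have hε : 0 ≤ ε := le_trans (abs_nonneg _) (hstat (Classical.arbitrary _))
  have hGb : ∀ j, |fderiv ℝ L βstar (Pi.single j 1)| ≤ G := by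
    intro j; rw [hGdef]
    exact le_ciSup (Finite.bddAbove_range fun j => |fderiv ℝ L βstar (Pi.single j 1)|) j
  have hG : 0 ≤ G := le_trans (abs_nonneg _) (hGb (Classical.arbitrary _))
  by_cases hne : ∃ j, j ∉ s
  swap
  · exfalso
    haveI : IsEmpty {j : Fin d // j ∉ s} := ⟨fun j => hne ⟨j.1, j.2⟩⟩
    have h0 : lmin = 0 := by rw [hlmindef]; exact Real.iInf_of_isEmpty _
    rw [h0] at hmin
    linarith
  haveI : Nonempty {j : Fin d // j ∉ s} := ⟨⟨hne.choose, hne.choose_spec⟩⟩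
  have hlminb : ∀ j ∉ s, lmin ≤ l j := by
    intro j hj; rw [hlmindef]
    exact ciInf_le (Finite.bddBelow_range fun j : {j : Fin d // j ∉ s} => l (j : Fin d)) ⟨j, hj⟩
  have hlmaxb : ∀ j, l j ≤ lmax := by
    intro j; rw [hlmaxdef]; exact le_ciSup (Finite.bddAbove_range l) j
  have hlmax0 : 0 ≤ lmax := le_trans (hl (Classical.arbitrary _)) (hlmaxb _)
  -- directional derivative inequality for convex functions
  have hdir : ∀ x y : Fin d → ℝ, fderiv ℝ L x (y - x) ≤ L y - L x := by
    intro x y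
    have hc : HasDerivAt (fun t : ℝ => t • (y - x) + x) (y - x) 0 := by
      simpa using ((hasDerivAt_id (0 : ℝ)).smul_const (y - x)).add_const x
    have hφ : HasDerivAt (fun t : ℝ => L (t • (y - x) + x)) (fderiv ℝ L x (y - x)) 0 := by
      have h := (hdiff ((0 : ℝ) • (y - x) + x)).hasFDerivAt.comp_hasDerivAt 0 hc
      simpa [Function.comp_def] using h
    have hφconv : ConvexOn ℝ Set.univ (fun t : ℝ => L (t • (y - x) + x)) := by
      have h := hconv.comp_affineMap (AffineMap.lineMap x y : ℝ →ᵃ[ℝ] (Fin d → ℝ))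
      simpa [Function.comp_def, AffineMap.lineMap_apply] using h
    have hslope := hφconv.le_slope_of_hasDerivAt (Set.mem_univ (0 : ℝ))
      (Set.mem_univ (1 : ℝ)) one_pos hφ
    simpa [slope, sub_add_cancel] using hslope
  -- expansion of fderiv along coordinates
  have hexp : ∀ w z : Fin d → ℝ,
      fderiv ℝ L w z = ∑ j, z j * fderiv ℝ L w (Pi.single j 1) := by
    intro w z
    have hz : z = ∑ j, z j • (Pi.single j (1 : ℝ) : Fin d → ℝ) := by
      funext k
      simp [Finset.sum_apply, Pi.single_apply]
    conv_lhs => rw [hz]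
    rw [map_sum]
    simp
  -- gradient monotonicity
  have hmono : ∑ j, (βtil j - βstar j) * fderiv ℝ L βstar (Pi.single j 1)
      ≤ ∑ j, (βtil j - βstar j) * fderiv ℝ L βtil (Pi.single j 1) := by
    have h1 := hdir βstar βtil
    have h2 := hdir βtil βstar
    have h3 : fderiv ℝ L βtil (βstar - βtil) = -fderiv ℝ L βtil (βtil - βstar) := by
      rw [← map_neg]; congr 1; abel
    have h4 : fderiv ℝ L βstar (βtil - βstar) ≤ fderiv ℝ L βtil (βtil - βstar) := by
      rw [h3] at h2; linarith
    have e1 := hexp βstar (βtil - βstar)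
    have e2 := hexp βtil (βtil - βstar)
    simp only [Pi.sub_apply] at e1 e2
    rw [e1, e2] at h4
    exact h4
  have hsgn : ∀ t : ℝ, Real.sign t * t = |t| := by
    intro t
    rcases lt_trichotomy t 0 with h | h | h
    · rw [Real.sign_of_neg h, abs_of_neg h]; ring
    · simp [h]
    · rw [Real.sign_of_pos h, abs_of_pos h]; ring
  set A : ℝ := ∑ j ∈ s, |βtil j - βstar j| with hAdef
  set B : ℝ := ∑ j ∈ sᶜ, |βtil j - βstar j| with hBdef
  have hA : 0 ≤ A := Finset.sum_nonneg fun j _ => abs_nonneg _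
  have hB : 0 ≤ B := Finset.sum_nonneg fun j _ => abs_nonneg _
  -- lower bound on the sᶜ part
  have h1 : lmin * B ≤ ∑ j ∈ sᶜ, l j * ξ j * (βtil j - βstar j) := by
    rw [hBdef, Finset.mul_sum]
    refine Finset.sum_le_sum fun j hj => ?_
    have hjs : j ∉ s := Finset.mem_compl.mp hj
    have hb0 : βstar j = 0 := hsupp j hjs
    rw [hb0, sub_zero]
    by_cases hbt : βtil j = 0
    · simp [hbt]
    · rw [hξ2 j hbt, mul_assoc, hsgn]
      exact mul_le_mul_of_nonneg_right (hlminb j hjs) (abs_nonneg _)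
  -- lower bound on the s part
  have h2 : -(lmax * A) ≤ ∑ j ∈ s, l j * ξ j * (βtil j - βstar j) := by
    have hterm : ∀ j ∈ s, -(lmax * |βtil j - βstar j|) ≤ l j * ξ j * (βtil j - βstar j) := by
      intro j _
      have habs : |l j * ξ j * (βtil j - βstar j)| ≤ lmax * |βtil j - βstar j| :=
        calc |l j * ξ j * (βtil j - βstar j)|
            = |l j| * |ξ j| * |βtil j - βstar j| := by rw [abs_mul, abs_mul]
          _ ≤ lmax * 1 * |βtil j - βstar j| := by
              have h1 : |l j| ≤ lmax := by rw [abs_of_nonneg (hl j)]; exact hlmaxb j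
              exact mul_le_mul_of_nonneg_right
                (mul_le_mul h1 (hξ1 j) (abs_nonneg _) hlmax0) (abs_nonneg _)
          _ = lmax * |βtil j - βstar j| := by ring
      linarith [neg_abs_le (l j * ξ j * (βtil j - βstar j))]
    calc -(lmax * A) = ∑ j ∈ s, -(lmax * |βtil j - βstar j|) := by
          rw [hAdef, Finset.mul_sum, ← Finset.sum_neg_distrib]
      _ ≤ _ := Finset.sum_le_sum hterm
  -- upper bound on the total
  have hsum : A + B = ∑ j, |βtil j - βstar j| := by
    rw [hAdef, hBdef, Finset.sum_add_sum_compl]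
  have h3 : ∑ j, l j * ξ j * (βtil j - βstar j) ≤ (ε + G) * (A + B) := by
    have hstep : ∑ j, l j * ξ j * (βtil j - βstar j)
        = ∑ j, (βtil j - βstar j) * (fderiv ℝ L βtil (Pi.single j 1) + l j * ξ j)
          - ∑ j, (βtil j - βstar j) * fderiv ℝ L βtil (Pi.single j 1) := by
      rw [← Finset.sum_sub_distrib]
      exact Finset.sum_congr rfl fun j _ => by ring
    have hb1 : ∑ j, (βtil j - βstar j) * (fderiv ℝ L βtil (Pi.single j 1) + l j * ξ j)
        ≤ ∑ j, |βtil j - βstar j| * ε := by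
      refine Finset.sum_le_sum fun j _ => ?_
      calc (βtil j - βstar j) * (fderiv ℝ L βtil (Pi.single j 1) + l j * ξ j)
          ≤ |(βtil j - βstar j) * (fderiv ℝ L βtil (Pi.single j 1) + l j * ξ j)| :=
            le_abs_self _
        _ = |βtil j - βstar j| * |fderiv ℝ L βtil (Pi.single j 1) + l j * ξ j| := abs_mul _ _
        _ ≤ |βtil j - βstar j| * ε := mul_le_mul_of_nonneg_left (hstat j) (abs_nonneg _)
    have hb2 : -∑ j, |βtil j - βstar j| * G
        ≤ ∑ j, (βtil j - βstar j) * fderiv ℝ L βstar (Pi.single j 1) := by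
      rw [← Finset.sum_neg_distrib]
      refine Finset.sum_le_sum fun j _ => ?_
      have habs : |(βtil j - βstar j) * fderiv ℝ L βstar (Pi.single j 1)|
          ≤ |βtil j - βstar j| * G := by
        rw [abs_mul]
        exact mul_le_mul_of_nonneg_left (hGb j) (abs_nonneg _)
      linarith [neg_abs_le ((βtil j - βstar j) * fderiv ℝ L βstar (Pi.single j 1))]
    have e : ∑ j, |βtil j - βstar j| * ε + ∑ j, |βtil j - βstar j| * G
        = (ε + G) * (A + B) := by
      rw [hsum, ← Finset.sum_mul, ← Finset.sum_mul]; ring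
    rw [hstep]
    linarith [hmono, hb1, hb2]
  have hsplit : ∑ j ∈ s, l j * ξ j * (βtil j - βstar j)
      + ∑ j ∈ sᶜ, l j * ξ j * (βtil j - βstar j)
      = ∑ j, l j * ξ j * (βtil j - βstar j) :=
    Finset.sum_add_sum_compl s _
  have hp : 0 < lmin - G - ε := by linarith [hmin]
  rw [div_mul_eq_mul_div, le_div_iff₀ hp]
  nlinarith [h1, h2, h3, hsplit]
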